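/- arXiv:2603.18039 — 3 statements merged into one kernel-verified Lean document; each statement's English description precedes it below -/
import Mathlib

section
/- Let d_in, d ≥ 1, α ∈ (0,1), T ≥ 1. Let A be a linear map from ℝ^{d_in} to ℝ^d with operator norm ‖A‖₂ ≤ M_A, let b, θ ∈ ℝ^d with ‖θ‖_∞ ≤ M_θ, and let σ : ℝ → ℝ be differentiable with sup_x |σ′(x)| ≤ B₁; assume γ := α + M_θ B₁ < 1. Given an input sequence x_{1:T} in ℝ^{d_in}, define u_0 = 0 and, for 1 ≤ t ≤ T, u_t = α u_{t-1} + A x_t + b - diag(θ)·σ(u_{t-1} - θ) and z_t = σ(u_t - θ), with σ applied coordinatewise. Then the layer map x_{1:T} ↦ z_{1:T} is Lipschitz with constant B₁ M_A S_T(γ) with respect to the sequence norm ‖v_{1:T}‖_{2,2} := (∑_{t=1}^T ‖v_t‖₂²)^{1/2}: for any two input sequences x_{1:T}, x′_{1:T}, (∑_{t=1}^T ‖z_t - z′_t‖₂²)^{1/2} ≤ B₁ M_A S_T(γ) · (∑_{t=1}^T ‖x_t - x′_t‖₂²)^{1/2}, where S_T(γ) := ∑_{k=0}^{T-1} γ^k.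 -/
lemma euclid_norm_le_of_abs_le {d : ℕ} (v w : EuclideanSpace ℝ (Fin d)) (C : ℝ) (hC : 0 ≤ C)
    (h : ∀ i, |v i| ≤ C * |w i|) : ‖v‖ ≤ C * ‖w‖ := by
  rw [EuclideanSpace.norm_eq, EuclideanSpace.norm_eq,
    show C * Real.sqrt (∑ i, ‖w i‖ ^ 2) = Real.sqrt (C ^ 2 * ∑ i, ‖w i‖ ^ 2) by
      rw [Real.sqrt_mul (sq_nonneg C), Real.sqrt_sq hC]]
  apply Real.sqrt_le_sqrt
  rw [Finset.mul_sum]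
  apply Finset.sum_le_sum
  intro i _
  rw [Real.norm_eq_abs, Real.norm_eq_abs, ← mul_pow]
  exact pow_le_pow_left₀ (abs_nonneg _) (h i) 2

/-- Young-type bound for convolution with a geometric kernel, ℓ² version. -/
lemma geom_conv_sq_sum_le (T : ℕ) (γ : ℝ) (hγ : 0 ≤ γ) (w : ℕ → ℝ) (hw : ∀ s, 0 ≤ w s) :
    ∑ t ∈ Finset.Icc 1 T, (∑ s ∈ Finset.Icc 1 t, γ ^ (t - s) * w s) ^ 2
      ≤ (∑ k ∈ Finset.range T, γ ^ k) ^ 2 * ∑ s ∈ Finset.Icc 1 T, w s ^ 2 := by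
  set S := ∑ k ∈ Finset.range T, γ ^ k with hS
  have hS0 : 0 ≤ S := Finset.sum_nonneg fun k _ => pow_nonneg hγ k
  have hker : ∀ t, t ≤ T → ∑ s ∈ Finset.Icc 1 t, γ ^ (t - s) ≤ S := by
    intro t ht
    have : ∑ s ∈ Finset.Icc 1 t, γ ^ (t - s) = ∑ k ∈ Finset.range t, γ ^ k := by
      rw [← Finset.Ico_add_one_right_eq_Icc, Finset.sum_Ico_eq_sum_range, ← Finset.sum_range_reflect
        (fun j => γ ^ j) t]
      apply Finset.sum_congr (by simp)
      intro k hk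
      simp only [Finset.mem_range] at hk
      congr 1; omega
    rw [this]
    exact Finset.sum_le_sum_of_subset_of_nonneg (Finset.range_subset_range.2 ht)
      fun k _ _ => pow_nonneg hγ k
  have step1 : ∀ t ∈ Finset.Icc 1 T,
      (∑ s ∈ Finset.Icc 1 t, γ ^ (t - s) * w s) ^ 2
        ≤ S * ∑ s ∈ Finset.Icc 1 t, γ ^ (t - s) * w s ^ 2 := by
    intro t ht
    simp only [Finset.mem_Icc] at ht
    have cs := Finset.sum_mul_sq_le_sq_mul_sq (Finset.Icc 1 t)
      (fun s => Real.sqrt (γ ^ (t - s))) (fun s => Real.sqrt (γ ^ (t - s)) * w s)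
    have h1 : ∀ s, Real.sqrt (γ ^ (t - s)) * (Real.sqrt (γ ^ (t - s)) * w s)
        = γ ^ (t - s) * w s := by
      intro s
      rw [← mul_assoc, Real.mul_self_sqrt (pow_nonneg hγ _)]
    have h2 : ∀ s, Real.sqrt (γ ^ (t - s)) ^ 2 = γ ^ (t - s) := fun s =>
      Real.sq_sqrt (pow_nonneg hγ _)
    have h3 : ∀ s, (Real.sqrt (γ ^ (t - s)) * w s) ^ 2 = γ ^ (t - s) * w s ^ 2 := by
      intro s; rw [mul_pow, h2]
    simp only [h1, h2, h3] at cs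
    refine cs.trans ?_
    apply mul_le_mul_of_nonneg_right (hker t ht.2)
    exact Finset.sum_nonneg fun s _ => mul_nonneg (pow_nonneg hγ _) (sq_nonneg _)
  calc ∑ t ∈ Finset.Icc 1 T, (∑ s ∈ Finset.Icc 1 t, γ ^ (t - s) * w s) ^ 2
      ≤ ∑ t ∈ Finset.Icc 1 T, S * ∑ s ∈ Finset.Icc 1 t, γ ^ (t - s) * w s ^ 2 :=
        Finset.sum_le_sum step1
    _ = S * ∑ t ∈ Finset.Icc 1 T, ∑ s ∈ Finset.Icc 1 t, γ ^ (t - s) * w s ^ 2 := by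
        rw [Finset.mul_sum]
    _ = S * ∑ s ∈ Finset.Icc 1 T, ∑ t ∈ Finset.Icc s T, γ ^ (t - s) * w s ^ 2 := by
        congr 1
        exact Finset.sum_comm' (by
          intro a c; simp only [Finset.mem_Icc]; omega)
    _ ≤ S * ∑ s ∈ Finset.Icc 1 T, S * w s ^ 2 := by
        apply mul_le_mul_of_nonneg_left ?_ hS0
        apply Finset.sum_le_sum
        intro s hs
        simp only [Finset.mem_Icc] at hs
        rw [← Finset.sum_mul]
        apply mul_le_mul_of_nonneg_right ?_ (sq_nonneg _)
        have : ∑ t ∈ Finset.Icc s T, γ ^ (t - s) = ∑ k ∈ Finset.range (T + 1 - s), γ ^ k := by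
          rw [← Finset.Ico_add_one_right_eq_Icc, Finset.sum_Ico_eq_sum_range]
          exact Finset.sum_congr rfl fun k hk => by congr 1; omega
        rw [this]
        exact Finset.sum_le_sum_of_subset_of_nonneg (Finset.range_subset_range.2 (by omega))
          fun k _ _ => pow_nonneg hγ k
    _ = S ^ 2 * ∑ s ∈ Finset.Icc 1 T, w s ^ 2 := by
        rw [← Finset.mul_sum]; ring

/-- A single surrogate-forward LIF layer, evolving as
`u_t = α u_{t-1} + A x_t + b - diag(θ)·σ(u_{t-1} - θ)`, `z_t = σ(u_t - θ)`
from `u_0 = 0`, is Lipschitz from input sequences to output sequences with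
constant `B₁ M_A S_T(γ)` in the `‖·‖_{2,2}` sequence norm, where
`γ = α + M_θ B₁ < 1` and `S_T(γ) = ∑_{k=0}^{T-1} γ^k`. -/
theorem surrogate_lif_layer_lipschitz
    (dIn d T : ℕ) (hdIn : 1 ≤ dIn) (hd : 1 ≤ d) (hT : 1 ≤ T)
    (α MA Mθ B₁ : ℝ) (hα0 : 0 < α) (hα1 : α < 1)
    (A : EuclideanSpace ℝ (Fin dIn) →L[ℝ] EuclideanSpace ℝ (Fin d))
    (hA : ‖A‖ ≤ MA)
    (b θ : EuclideanSpace ℝ (Fin d)) (hθ : ∀ i, |θ i| ≤ Mθ)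
    (σ : ℝ → ℝ) (hσ : Differentiable ℝ σ) (hB₁ : ∀ x, |deriv σ x| ≤ B₁)
    (hγ : α + Mθ * B₁ < 1)
    (x x' : ℕ → EuclideanSpace ℝ (Fin dIn))
    (u u' z z' : ℕ → EuclideanSpace ℝ (Fin d))
    (hu0 : u 0 = 0) (hu0' : u' 0 = 0)
    (hu : ∀ t, 1 ≤ t → t ≤ T →
      u t = α • u (t - 1) + A (x t) + b
        - (WithLp.equiv 2 (Fin d → ℝ)).symm (fun i => θ i * σ (u (t - 1) i - θ i)))
    (hu' : ∀ t, 1 ≤ t → t ≤ T →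
      u' t = α • u' (t - 1) + A (x' t) + b
        - (WithLp.equiv 2 (Fin d → ℝ)).symm (fun i => θ i * σ (u' (t - 1) i - θ i)))
    (hz : ∀ t, 1 ≤ t → t ≤ T →
      z t = (WithLp.equiv 2 (Fin d → ℝ)).symm (fun i => σ (u t i - θ i)))
    (hz' : ∀ t, 1 ≤ t → t ≤ T →
      z' t = (WithLp.equiv 2 (Fin d → ℝ)).symm (fun i => σ (u' t i - θ i))) :
    Real.sqrt (∑ t ∈ Finset.Icc 1 T, ‖z t - z' t‖ ^ 2)
      ≤ B₁ * MA * (∑ k ∈ Finset.range T, (α + Mθ * B₁) ^ k)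
        * Real.sqrt (∑ t ∈ Finset.Icc 1 T, ‖x t - x' t‖ ^ 2) := by
  -- basic nonnegativity
  have hB₁0 : 0 ≤ B₁ := (abs_nonneg _).trans (hB₁ 0)
  have hMθ0 : 0 ≤ Mθ := (abs_nonneg _).trans (hθ ⟨0, hd⟩)
  have hMA0 : 0 ≤ MA := (norm_nonneg A).trans hA
  set γ : ℝ := α + Mθ * B₁ with hγdef
  have hγ0 : 0 ≤ γ := by positivity
  -- σ is B₁-Lipschitz
  have hlip : ∀ a c : ℝ, |σ a - σ c| ≤ B₁ * |a - c| := by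
    intro a c
    have := convex_univ.norm_image_sub_le_of_norm_deriv_le (f := σ)
      (fun y _ => hσ y) (fun y _ => by simpa using hB₁ y)
      (Set.mem_univ c) (Set.mem_univ a)
    simpa using this
  set w : ℕ → ℝ := fun s => ‖x s - x' s‖ with hwdef
  have hw0 : ∀ s, 0 ≤ w s := fun s => norm_nonneg _
  -- one-step recursion bound
  have hstep : ∀ t, 1 ≤ t → t ≤ T →
      ‖u t - u' t‖ ≤ γ * ‖u (t - 1) - u' (t - 1)‖ + MA * w t := by
    intro t ht1 htT
    set D : EuclideanSpace ℝ (Fin d) := (WithLp.equiv 2 (Fin d → ℝ)).symm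
      (fun i => θ i * (σ (u (t - 1) i - θ i) - σ (u' (t - 1) i - θ i))) with hDdef
    have hEq : u t - u' t = α • (u (t - 1) - u' (t - 1)) + A (x t - x' t) - D := by
      rw [hu t ht1 htT, hu' t ht1 htT, map_sub, smul_sub]
      have hD : D = (WithLp.equiv 2 (Fin d → ℝ)).symm (fun i => θ i * σ (u (t - 1) i - θ i))
          - (WithLp.equiv 2 (Fin d → ℝ)).symm (fun i => θ i * σ (u' (t - 1) i - θ i)) := by
        ext i
        simp [hDdef]
        ring
      rw [hD]
      abel
    have hDnorm : ‖D‖ ≤ Mθ * B₁ * ‖u (t - 1) - u' (t - 1)‖ := by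
      apply euclid_norm_le_of_abs_le _ _ _ (by positivity)
      intro i
      have : |D i| ≤ Mθ * (B₁ * |u (t - 1) i - u' (t - 1) i|) := by
        rw [hDdef]
        simp only [WithLp.equiv_symm_apply, PiLp.toLp_apply, abs_mul]
        apply mul_le_mul (hθ i) ?_ (abs_nonneg _) hMθ0
        have := hlip (u (t - 1) i - θ i) (u' (t - 1) i - θ i)
        simpa [sub_sub_sub_cancel_right] using this
      refine this.trans (le_of_eq ?_)
      have : (u (t - 1) - u' (t - 1)) i = u (t - 1) i - u' (t - 1) i := rfl
      rw [this]; ring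
    calc ‖u t - u' t‖ ≤ ‖α • (u (t - 1) - u' (t - 1)) + A (x t - x' t)‖ + ‖D‖ := by
          rw [hEq]; exact norm_sub_le _ _
      _ ≤ ‖α • (u (t - 1) - u' (t - 1))‖ + ‖A (x t - x' t)‖ + ‖D‖ := by
          gcongr; exact norm_add_le _ _
      _ ≤ α * ‖u (t - 1) - u' (t - 1)‖ + MA * w t + Mθ * B₁ * ‖u (t - 1) - u' (t - 1)‖ := by
          gcongr
          · rw [norm_smul, Real.norm_eq_abs, abs_of_pos hα0]
          · exact (A.le_opNorm _).trans (mul_le_mul_of_nonneg_right hA (norm_nonneg _))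
      _ = γ * ‖u (t - 1) - u' (t - 1)‖ + MA * w t := by rw [hγdef]; ring
  -- iterated bound
  have hind : ∀ t, t ≤ T → ‖u t - u' t‖ ≤ MA * ∑ s ∈ Finset.Icc 1 t, γ ^ (t - s) * w s := by
    intro t
    induction t with
    | zero => intro _; simp [hu0, hu0']
    | succ n ih =>
      intro hnT
      have hn : n ≤ T := by omega
      have h1 := hstep (n + 1) (by omega) hnT
      have hrec : ‖u (n + 1) - u' (n + 1)‖ ≤ γ * ‖u n - u' n‖ + MA * w (n + 1) := by
        simpa using h1
      refine hrec.trans ?_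
      have hsum : ∑ s ∈ Finset.Icc 1 (n + 1), γ ^ (n + 1 - s) * w s
          = (∑ s ∈ Finset.Icc 1 n, γ ^ (n + 1 - s) * w s) + γ ^ 0 * w (n + 1) := by
        rw [Finset.sum_Icc_succ_top (by omega)]
        simp
      have hmono : γ * ∑ s ∈ Finset.Icc 1 n, γ ^ (n - s) * w s
          = ∑ s ∈ Finset.Icc 1 n, γ ^ (n + 1 - s) * w s := by
        rw [Finset.mul_sum]
        apply Finset.sum_congr rfl
        intro s hs
        simp only [Finset.mem_Icc] at hs
        rw [← mul_assoc, ← pow_succ']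
        congr 2
        omega
      rw [hsum, mul_add]
      calc γ * ‖u n - u' n‖ + MA * w (n + 1)
          ≤ γ * (MA * ∑ s ∈ Finset.Icc 1 n, γ ^ (n - s) * w s) + MA * w (n + 1) := by
            gcongr
            exact ih hn
        _ = MA * ∑ s ∈ Finset.Icc 1 n, γ ^ (n + 1 - s) * w s + MA * (γ ^ 0 * w (n + 1)) := by
            rw [← hmono]; ring
  -- z bound per time step
  have hzb : ∀ t, 1 ≤ t → t ≤ T → ‖z t - z' t‖ ≤ B₁ * ‖u t - u' t‖ := by
    intro t ht1 htT
    rw [hz t ht1 htT, hz' t ht1 htT]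
    apply euclid_norm_le_of_abs_le _ _ _ hB₁0
    intro i
    have h1 : ((WithLp.equiv 2 (Fin d → ℝ)).symm (fun i => σ (u t i - θ i))
        - (WithLp.equiv 2 (Fin d → ℝ)).symm (fun i => σ (u' t i - θ i))) i
        = σ (u t i - θ i) - σ (u' t i - θ i) := rfl
    have h2 : (u t - u' t) i = u t i - u' t i := rfl
    rw [h1, h2]
    have := hlip (u t i - θ i) (u' t i - θ i)
    simpa [sub_sub_sub_cancel_right] using this
  -- combine
  set S : ℝ := ∑ k ∈ Finset.range T, γ ^ k with hSdef
  have hS0 : 0 ≤ S := Finset.sum_nonneg fun k _ => pow_nonneg hγ0 k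
  have key : ∑ t ∈ Finset.Icc 1 T, ‖z t - z' t‖ ^ 2
      ≤ (B₁ * MA * S) ^ 2 * ∑ t ∈ Finset.Icc 1 T, w t ^ 2 := by
    have h1 : ∑ t ∈ Finset.Icc 1 T, ‖z t - z' t‖ ^ 2
        ≤ ∑ t ∈ Finset.Icc 1 T, (B₁ * MA) ^ 2 * (∑ s ∈ Finset.Icc 1 t, γ ^ (t - s) * w s) ^ 2 := by
      apply Finset.sum_le_sum
      intro t ht
      simp only [Finset.mem_Icc] at ht
      have hzt : ‖z t - z' t‖ ≤ B₁ * MA * ∑ s ∈ Finset.Icc 1 t, γ ^ (t - s) * w s := by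
        refine (hzb t ht.1 ht.2).trans ?_
        rw [mul_assoc]
        exact mul_le_mul_of_nonneg_left (hind t ht.2) hB₁0
      calc ‖z t - z' t‖ ^ 2 ≤ (B₁ * MA * ∑ s ∈ Finset.Icc 1 t, γ ^ (t - s) * w s) ^ 2 :=
            pow_le_pow_left₀ (norm_nonneg _) hzt 2
        _ = (B₁ * MA) ^ 2 * (∑ s ∈ Finset.Icc 1 t, γ ^ (t - s) * w s) ^ 2 := by ring
    rw [← Finset.mul_sum] at h1
    refine h1.trans ?_
    have h2 := geom_conv_sq_sum_le T γ hγ0 w hw0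
    calc (B₁ * MA) ^ 2 * ∑ t ∈ Finset.Icc 1 T, (∑ s ∈ Finset.Icc 1 t, γ ^ (t - s) * w s) ^ 2
        ≤ (B₁ * MA) ^ 2 * (S ^ 2 * ∑ s ∈ Finset.Icc 1 T, w s ^ 2) := by
          exact mul_le_mul_of_nonneg_left h2 (by positivity)
      _ = (B₁ * MA * S) ^ 2 * ∑ t ∈ Finset.Icc 1 T, w t ^ 2 := by ring
  have hfin : Real.sqrt ((B₁ * MA * S) ^ 2 * ∑ t ∈ Finset.Icc 1 T, w t ^ 2)
      = B₁ * MA * S * Real.sqrt (∑ t ∈ Finset.Icc 1 T, w t ^ 2) := by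
    rw [Real.sqrt_mul (sq_nonneg _), Real.sqrt_sq (mul_nonneg (mul_nonneg hB₁0 hMA0) hS0)]
  calc Real.sqrt (∑ t ∈ Finset.Icc 1 T, ‖z t - z' t‖ ^ 2)
      ≤ Real.sqrt ((B₁ * MA * S) ^ 2 * ∑ t ∈ Finset.Icc 1 T, w t ^ 2) :=
        Real.sqrt_le_sqrt key
    _ = B₁ * MA * S * Real.sqrt (∑ t ∈ Finset.Icc 1 T, w t ^ 2) := hfin
end

section
/- Let L ≥ 1 layers of surrogate forward LIF dynamics be given: for each ℓ = 1, …, L, a linear map A^{(ℓ)} with ‖A^{(ℓ)}‖₂ ≤ M_A, bias b^{(ℓ)}, threshold θ^{(ℓ)} with ‖θ^{(ℓ)}‖_∞ ≤ M_θ, leak α ∈ (0,1), and a B₁-Lipschitz differentiable surrogate σ : ℝ → ℝ, with γ := α + M_θ B₁ < 1. For an input sequence x_{1:T}, set z_t^{(0)} := x_t and, for each layer ℓ, u_0^{(ℓ)} = 0, u_t^{(ℓ)} = α u_{t-1}^{(ℓ)} + A^{(ℓ)} z_t^{(ℓ-1)} + b^{(ℓ)} - diag(θ^{(ℓ)})·σ(u_{t-1}^{(ℓ)}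 - θ^{(ℓ)}), z_t^{(ℓ)} = σ(u_t^{(ℓ)} - θ^{(ℓ)}). Define the readout f(x_{1:T}) = W_out · ((1/T) ∑_{t=1}^T z_t^{(L)}) + b_out with ‖W_out‖₂ ≤ M_out. Then for any two input sequences, ‖f(x_{1:T}) - f(x′_{1:T})‖₂ ≤ L_x · (∑_{t=1}^T ‖x_t - x′_t‖₂²)^{1/2}, where L_x := M_out · (B₁ M_A S_T(γ))^L / √T and S_T(γ) := ∑_{k=0}^{T-1} γ^k. -/
open Finset

private theorem snn_lip_of_deriv (σ : ℝ → ℝ) (hσ : Differentiable ℝ σ) (B : ℝ)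
    (hB : ∀ s, |deriv σ s| ≤ B) : ∀ a b : ℝ, |σ a - σ b| ≤ B * |a - b| := by
  have hB0 : 0 ≤ B := le_trans (abs_nonneg _) (hB 0)
  have h := lipschitzWith_of_nnnorm_deriv_le hσ (C := ⟨B, hB0⟩)
    (fun s => NNReal.coe_le_coe.1 (by rw [coe_nnnorm, Real.norm_eq_abs]; exact hB s))
  intro a b
  have := h.dist_le_mul a b; rw [Real.dist_eq, Real.dist_eq] at this; exact this

private theorem snn_euclid_norm_le {n : ℕ} (v w : EuclideanSpace ℝ (Fin n)) (c : ℝ)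
    (hc : 0 ≤ c) (h : ∀ i, |v i| ≤ c * |w i|) : ‖v‖ ≤ c * ‖w‖ := by
  rw [EuclideanSpace.norm_eq, EuclideanSpace.norm_eq,
    ← Real.sqrt_sq hc, ← Real.sqrt_mul (by positivity)]
  apply Real.sqrt_le_sqrt
  rw [Finset.mul_sum]
  apply Finset.sum_le_sum
  intro i _
  calc ‖v i‖ ^ 2 = |v i| ^ 2 := by rw [Real.norm_eq_abs]
    _ ≤ (c * |w i|) ^ 2 := by apply pow_le_pow_left₀ (abs_nonneg _) (h i)
    _ = c ^ 2 * ‖w i‖ ^ 2 := by rw [mul_pow, Real.norm_eq_abs]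

private theorem snn_conv_sq_sum (T : ℕ) (γ : ℝ) (hγ : 0 ≤ γ) (a : ℕ → ℝ) :
    ∑ t ∈ Finset.Icc 1 T, (∑ k ∈ Finset.Icc 1 t, γ ^ (t - k) * a k) ^ 2
      ≤ (∑ k ∈ Finset.range T, γ ^ k) ^ 2 * ∑ k ∈ Finset.Icc 1 T, a k ^ 2 := by
  set S := ∑ k ∈ Finset.range T, γ ^ k with hS
  have hS0 : 0 ≤ S := Finset.sum_nonneg fun k _ => pow_nonneg hγ k
  have tail : ∀ c t : ℕ, 1 ≤ c → t ≤ T → ∑ k ∈ Finset.Icc c t, γ ^ (t - k) ≤ S := by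
    intro c t hc ht
    have h1 : ∑ k ∈ Finset.Icc c t, γ ^ (t - k) ≤ ∑ k ∈ Finset.Icc 1 t, γ ^ (t - k) := by
      apply Finset.sum_le_sum_of_subset_of_nonneg
      · intro k hk; simp only [Finset.mem_Icc] at *; omega
      · intro k _ _; positivity
    have h2 : ∑ k ∈ Finset.Icc 1 t, γ ^ (t - k) = ∑ j ∈ Finset.range t, γ ^ j := by
      apply Finset.sum_nbij' (fun k => t - k) (fun j => t - j)
      · intro k hk; simp only [Finset.mem_Icc, Finset.mem_range] at *; omega
      · intro j hj; simp only [Finset.mem_Icc, Finset.mem_range] at *; omega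
      · intro k hk; simp only [Finset.mem_Icc] at hk; omega
      · intro j hj; simp only [Finset.mem_range] at hj; omega
      · intro k _; rfl
    have h3 : ∑ j ∈ Finset.range t, γ ^ j ≤ S := by
      rw [hS]
      apply Finset.sum_le_sum_of_subset_of_nonneg
      · exact Finset.range_subset_range.2 ht
      · intro k _ _; positivity
    linarith
  have CS : ∀ t ∈ Finset.Icc 1 T, (∑ k ∈ Finset.Icc 1 t, γ ^ (t - k) * a k) ^ 2
      ≤ S * ∑ k ∈ Finset.Icc 1 t, γ ^ (t - k) * a k ^ 2 := by
    intro t ht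
    simp only [Finset.mem_Icc] at ht
    have cs2 := Finset.sum_mul_sq_le_sq_mul_sq (Finset.Icc 1 t)
      (fun k => Real.sqrt (γ ^ (t - k))) (fun k => Real.sqrt (γ ^ (t - k)) * a k)
    have e1 : ∀ k : ℕ, Real.sqrt (γ ^ (t - k)) * (Real.sqrt (γ ^ (t - k)) * a k)
        = γ ^ (t - k) * a k := by
      intro k
      rw [← mul_assoc, Real.mul_self_sqrt (by positivity)]
    have e2 : ∀ k : ℕ, Real.sqrt (γ ^ (t - k)) ^ 2 = γ ^ (t - k) := fun k =>
      Real.sq_sqrt (by positivity)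
    calc (∑ k ∈ Finset.Icc 1 t, γ ^ (t - k) * a k) ^ 2
        = (∑ k ∈ Finset.Icc 1 t,
            Real.sqrt (γ ^ (t-k)) * (Real.sqrt (γ ^ (t-k)) * a k)) ^ 2 := by
          congr 1; exact Finset.sum_congr rfl fun k _ => (e1 k).symm
      _ ≤ (∑ k ∈ Finset.Icc 1 t, Real.sqrt (γ ^ (t-k)) ^ 2)
            * ∑ k ∈ Finset.Icc 1 t, (Real.sqrt (γ ^ (t-k)) * a k) ^ 2 := cs2
      _ ≤ S * ∑ k ∈ Finset.Icc 1 t, γ ^ (t - k) * a k ^ 2 := by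
          apply mul_le_mul
          · rw [Finset.sum_congr rfl fun k _ => e2 k]; exact tail 1 t le_rfl ht.2
          · apply le_of_eq; apply Finset.sum_congr rfl; intro k _
            rw [mul_pow, e2]
          · positivity
          · exact hS0
  have step : ∑ t ∈ Finset.Icc 1 T, (∑ k ∈ Finset.Icc 1 t, γ ^ (t - k) * a k) ^ 2
      ≤ S * ∑ t ∈ Finset.Icc 1 T, ∑ k ∈ Finset.Icc 1 t, γ ^ (t - k) * a k ^ 2 := by
    rw [Finset.mul_sum]
    exact Finset.sum_le_sum CS
  have swap : ∑ t ∈ Finset.Icc 1 T, ∑ k ∈ Finset.Icc 1 t, γ ^ (t - k) * a k ^ 2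
      = ∑ k ∈ Finset.Icc 1 T, ∑ t ∈ Finset.Icc k T, γ ^ (t - k) * a k ^ 2 := by
    apply Finset.sum_comm'
    intro x y; simp only [Finset.mem_Icc]; omega
  have inner : ∑ k ∈ Finset.Icc 1 T, ∑ t ∈ Finset.Icc k T, γ ^ (t - k) * a k ^ 2
      ≤ S * ∑ k ∈ Finset.Icc 1 T, a k ^ 2 := by
    rw [Finset.mul_sum]
    apply Finset.sum_le_sum
    intro k hk
    simp only [Finset.mem_Icc] at hk
    have hsum : ∑ t ∈ Finset.Icc k T, γ ^ (t - k) * a k ^ 2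
        = (∑ t ∈ Finset.Icc k T, γ ^ (t - k)) * a k ^ 2 := by rw [Finset.sum_mul]
    rw [hsum]
    apply mul_le_mul_of_nonneg_right _ (by positivity : (0:ℝ) ≤ a k ^ 2)
    have h2 : ∑ t ∈ Finset.Icc k T, γ ^ (t - k) = ∑ j ∈ Finset.range (T - k + 1), γ ^ j := by
      apply Finset.sum_nbij' (fun t => t - k) (fun j => j + k)
      · intro t ht; simp only [Finset.mem_Icc, Finset.mem_range] at *; omega
      · intro j hj; simp only [Finset.mem_Icc, Finset.mem_range] at *; omega
      · intro t ht; simp only [Finset.mem_Icc] at ht; omega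
      · intro j hj; omega
      · intro t _; rfl
    rw [h2, hS]
    apply Finset.sum_le_sum_of_subset_of_nonneg
    · apply Finset.range_subset_range.2; omega
    · intro _ _ _; positivity
  calc ∑ t ∈ Finset.Icc 1 T, (∑ k ∈ Finset.Icc 1 t, γ ^ (t - k) * a k) ^ 2
      ≤ S * ∑ t ∈ Finset.Icc 1 T, ∑ k ∈ Finset.Icc 1 t, γ ^ (t - k) * a k ^ 2 := step
    _ = S * ∑ k ∈ Finset.Icc 1 T, ∑ t ∈ Finset.Icc k T, γ ^ (t - k) * a k ^ 2 := by rw [swap]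
    _ ≤ S * (S * ∑ k ∈ Finset.Icc 1 T, a k ^ 2) := mul_le_mul_of_nonneg_left inner hS0
    _ = S ^ 2 * ∑ k ∈ Finset.Icc 1 T, a k ^ 2 := by ring

set_option maxHeartbeats 1000000 in
/-- An `L`-layer surrogate-forward LIF network with leak
`α ∈ (0,1)`, layer maps `‖A^{(ℓ)}‖ ≤ M_A`, thresholds `‖θ^{(ℓ)}‖_∞ ≤ M_θ`,
`B₁`-bounded surrogate derivative, contraction `γ = α + M_θ B₁ < 1`, and
time-averaged linear readout `‖W_out‖ ≤ M_out`, is input-Lipschitz with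
constant `L_x = M_out (B₁ M_A S_T(γ))^L / √T` in the sequence norm
`‖x_{1:T}‖_{2,2}`, where `S_T(γ) = ∑_{k=0}^{T-1} γ^k`. -/
theorem surrogate_snn_input_lipschitz
    (L T C : ℕ) (hL : 1 ≤ L) (hT : 1 ≤ T) (hC : 1 ≤ C)
    (d : ℕ → ℕ) (hd : ∀ ℓ, 1 ≤ d ℓ)
    (α MA Mθ B₁ Mout : ℝ) (hα0 : 0 < α) (hα1 : α < 1)
    (A : ∀ ℓ : ℕ, EuclideanSpace ℝ (Fin (d (ℓ - 1))) →L[ℝ] EuclideanSpace ℝ (Fin (d ℓ)))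
    (hA : ∀ ℓ, 1 ≤ ℓ → ℓ ≤ L → ‖A ℓ‖ ≤ MA)
    (b θ : ∀ ℓ : ℕ, EuclideanSpace ℝ (Fin (d ℓ)))
    (hθ : ∀ ℓ, 1 ≤ ℓ → ℓ ≤ L → ∀ i, |θ ℓ i| ≤ Mθ)
    (σ : ℝ → ℝ) (hσ : Differentiable ℝ σ) (hB₁ : ∀ s, |deriv σ s| ≤ B₁)
    (hγ : α + Mθ * B₁ < 1)
    (Wout : EuclideanSpace ℝ (Fin (d L)) →L[ℝ] EuclideanSpace ℝ (Fin C))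
    (hW : ‖Wout‖ ≤ Mout) (bout : EuclideanSpace ℝ (Fin C))
    (x x' : ℕ → EuclideanSpace ℝ (Fin (d 0)))
    (u u' z z' : ∀ ℓ : ℕ, ℕ → EuclideanSpace ℝ (Fin (d ℓ)))
    (hz0 : ∀ t, 1 ≤ t → t ≤ T → z 0 t = x t)
    (hz0' : ∀ t, 1 ≤ t → t ≤ T → z' 0 t = x' t)
    (hu0 : ∀ ℓ, 1 ≤ ℓ → ℓ ≤ L → u ℓ 0 = 0)
    (hu0' : ∀ ℓ, 1 ≤ ℓ → ℓ ≤ L → u' ℓ 0 = 0)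
    (hu : ∀ ℓ, 1 ≤ ℓ → ℓ ≤ L → ∀ t, 1 ≤ t → t ≤ T →
      u ℓ t = α • u ℓ (t - 1) + A ℓ (z (ℓ - 1) t) + b ℓ
        - (WithLp.equiv 2 (Fin (d ℓ) → ℝ)).symm
            (fun i => θ ℓ i * σ (u ℓ (t - 1) i - θ ℓ i)))
    (hu' : ∀ ℓ, 1 ≤ ℓ → ℓ ≤ L → ∀ t, 1 ≤ t → t ≤ T →
      u' ℓ t = α • u' ℓ (t - 1) + A ℓ (z' (ℓ - 1) t) + b ℓ
        - (WithLp.equiv 2 (Fin (d ℓ) → ℝ)).symm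
            (fun i => θ ℓ i * σ (u' ℓ (t - 1) i - θ ℓ i)))
    (hz : ∀ ℓ, 1 ≤ ℓ → ℓ ≤ L → ∀ t, 1 ≤ t → t ≤ T →
      z ℓ t = (WithLp.equiv 2 (Fin (d ℓ) → ℝ)).symm (fun i => σ (u ℓ t i - θ ℓ i)))
    (hz' : ∀ ℓ, 1 ≤ ℓ → ℓ ≤ L → ∀ t, 1 ≤ t → t ≤ T →
      z' ℓ t = (WithLp.equiv 2 (Fin (d ℓ) → ℝ)).symm (fun i => σ (u' ℓ t i - θ ℓ i))) :
    ‖(Wout (((T : ℝ)⁻¹) • ∑ t ∈ Finset.Icc 1 T, z L t) + bout)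
        - (Wout (((T : ℝ)⁻¹) • ∑ t ∈ Finset.Icc 1 T, z' L t) + bout)‖
      ≤ Mout * (B₁ * MA * ∑ k ∈ Finset.range T, (α + Mθ * B₁) ^ k) ^ L
          / Real.sqrt T
        * Real.sqrt (∑ t ∈ Finset.Icc 1 T, ‖x t - x' t‖ ^ 2) := by
  have hB0 : 0 ≤ B₁ := le_trans (abs_nonneg _) (hB₁ 0)
  have hMA0 : 0 ≤ MA := le_trans (norm_nonneg _) (hA 1 le_rfl hL)
  have hMθ0 : 0 ≤ Mθ := le_trans (abs_nonneg _) (hθ 1 le_rfl hL ⟨0, hd 1⟩)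
  have hMout0 : 0 ≤ Mout := le_trans (norm_nonneg _) hW
  set γ : ℝ := α + Mθ * B₁ with hγdef
  have hγ0 : 0 ≤ γ := add_nonneg hα0.le (mul_nonneg hMθ0 hB0)
  set S : ℝ := ∑ k ∈ Finset.range T, γ ^ k with hSdef
  have hS0 : 0 ≤ S := Finset.sum_nonneg fun k _ => pow_nonneg hγ0 k
  have lip := snn_lip_of_deriv σ hσ B₁ hB₁
  -- z increment bound
  have hzb : ∀ ℓ, 1 ≤ ℓ → ℓ ≤ L → ∀ t, 1 ≤ t → t ≤ T →
      ‖z ℓ t - z' ℓ t‖ ≤ B₁ * ‖u ℓ t - u' ℓ t‖ := by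
    intro ℓ h1 h2 t ht1 ht2
    apply snn_euclid_norm_le _ _ _ hB0
    intro i
    simp only [PiLp.sub_apply]
    rw [hz ℓ h1 h2 t ht1 ht2, hz' ℓ h1 h2 t ht1 ht2]
    simp only [WithLp.equiv_symm_apply, PiLp.toLp_apply]
    have l1 := lip (u ℓ t i - θ ℓ i) (u' ℓ t i - θ ℓ i)
    rwa [sub_sub_sub_cancel_right] at l1
  -- u increment recursion
  have hub : ∀ ℓ, 1 ≤ ℓ → ℓ ≤ L → ∀ t, 1 ≤ t → t ≤ T →
      ‖u ℓ t - u' ℓ t‖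
        ≤ γ * ‖u ℓ (t-1) - u' ℓ (t-1)‖ + MA * ‖z (ℓ-1) t - z' (ℓ-1) t‖ := by
    intro ℓ h1 h2 t ht1 ht2
    have hdec : u ℓ t - u' ℓ t
        = (α • (u ℓ (t-1) - u' ℓ (t-1))
            - ((WithLp.equiv 2 (Fin (d ℓ) → ℝ)).symm
                (fun i => θ ℓ i * σ (u ℓ (t-1) i - θ ℓ i))
              - (WithLp.equiv 2 (Fin (d ℓ) → ℝ)).symm
                (fun i => θ ℓ i * σ (u' ℓ (t-1) i - θ ℓ i))))
          + A ℓ (z (ℓ-1) t - z' (ℓ-1) t) := by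
      rw [hu ℓ h1 h2 t ht1 ht2, hu' ℓ h1 h2 t ht1 ht2, map_sub, smul_sub]
      abel
    rw [hdec]
    refine le_trans (norm_add_le _ _) (add_le_add ?_ ?_)
    · apply snn_euclid_norm_le _ _ _ hγ0
      intro i
      simp only [PiLp.sub_apply, PiLp.smul_apply, WithLp.equiv_symm_apply, PiLp.toLp_apply, smul_eq_mul]
      have l1 := lip (u ℓ (t-1) i - θ ℓ i) (u' ℓ (t-1) i - θ ℓ i)
      rw [sub_sub_sub_cancel_right] at l1
      have hθi := hθ ℓ h1 h2 i
      have t1 : |θ ℓ i * (σ (u ℓ (t-1) i - θ ℓ i) - σ (u' ℓ (t-1) i - θ ℓ i))|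
          ≤ Mθ * (B₁ * |u ℓ (t-1) i - u' ℓ (t-1) i|) := by
        rw [abs_mul]
        exact mul_le_mul hθi l1 (abs_nonneg _) hMθ0
      have e : α * (u ℓ (t-1) i - u' ℓ (t-1) i)
            - (θ ℓ i * σ (u ℓ (t-1) i - θ ℓ i) - θ ℓ i * σ (u' ℓ (t-1) i - θ ℓ i))
          = α * (u ℓ (t-1) i - u' ℓ (t-1) i)
            + (-(θ ℓ i * (σ (u ℓ (t-1) i - θ ℓ i) - σ (u' ℓ (t-1) i - θ ℓ i)))) := by ring
      calc |α * (u ℓ (t-1) i - u' ℓ (t-1) i)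
            - (θ ℓ i * σ (u ℓ (t-1) i - θ ℓ i) - θ ℓ i * σ (u' ℓ (t-1) i - θ ℓ i))|
          ≤ |α * (u ℓ (t-1) i - u' ℓ (t-1) i)|
            + |θ ℓ i * (σ (u ℓ (t-1) i - θ ℓ i) - σ (u' ℓ (t-1) i - θ ℓ i))| := by
            rw [e]
            exact le_trans (abs_add_le _ _) (by rw [abs_neg])
        _ ≤ α * |u ℓ (t-1) i - u' ℓ (t-1) i|
            + Mθ * (B₁ * |u ℓ (t-1) i - u' ℓ (t-1) i|) := by
            rw [abs_mul, abs_of_pos hα0]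
            exact add_le_add le_rfl t1
        _ = γ * |u ℓ (t-1) i - u' ℓ (t-1) i| := by rw [hγdef]; ring
    · calc ‖A ℓ (z (ℓ-1) t - z' (ℓ-1) t)‖
          ≤ ‖A ℓ‖ * ‖z (ℓ-1) t - z' (ℓ-1) t‖ := (A ℓ).le_opNorm _
        _ ≤ MA * ‖z (ℓ-1) t - z' (ℓ-1) t‖ :=
            mul_le_mul_of_nonneg_right (hA ℓ h1 h2) (norm_nonneg _)
  -- unrolled u bound
  have huun : ∀ ℓ, 1 ≤ ℓ → ℓ ≤ L → ∀ t, t ≤ T →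
      ‖u ℓ t - u' ℓ t‖
        ≤ ∑ k ∈ Finset.Icc 1 t, γ ^ (t - k) * (MA * ‖z (ℓ-1) k - z' (ℓ-1) k‖) := by
    intro ℓ h1 h2 t
    induction t with
    | zero =>
      intro _
      simp [hu0 ℓ h1 h2, hu0' ℓ h1 h2,
        Finset.Icc_eq_empty (by omega : ¬(1:ℕ) ≤ 0)]
    | succ s ih =>
      intro hsT
      have hs : s ≤ T := le_trans (Nat.le_succ s) hsT
      have hrec := hub ℓ h1 h2 (s+1) (Nat.succ_le_succ (Nat.zero_le s)) hsT
      simp only [Nat.add_sub_cancel] at hrec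
      have step : γ * ‖u ℓ s - u' ℓ s‖
          ≤ γ * ∑ k ∈ Finset.Icc 1 s, γ ^ (s - k) * (MA * ‖z (ℓ-1) k - z' (ℓ-1) k‖) :=
        mul_le_mul_of_nonneg_left (ih hs) hγ0
      have e : γ * ∑ k ∈ Finset.Icc 1 s, γ ^ (s - k) * (MA * ‖z (ℓ-1) k - z' (ℓ-1) k‖)
          = ∑ k ∈ Finset.Icc 1 s, γ ^ (s + 1 - k) * (MA * ‖z (ℓ-1) k - z' (ℓ-1) k‖) := by
        rw [Finset.mul_sum]
        apply Finset.sum_congr rfl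
        intro k hk
        simp only [Finset.mem_Icc] at hk
        have hk' : s + 1 - k = (s - k) + 1 := by omega
        rw [hk', pow_succ]
        ring
      rw [Finset.sum_Icc_succ_top (Nat.succ_le_succ (Nat.zero_le s))]
      have e2 : γ ^ (s + 1 - (s + 1)) * (MA * ‖z (ℓ-1) (s+1) - z' (ℓ-1) (s+1)‖)
          = MA * ‖z (ℓ-1) (s+1) - z' (ℓ-1) (s+1)‖ := by
        rw [Nat.sub_self, pow_zero, one_mul]
      rw [e2]
      calc ‖u ℓ (s+1) - u' ℓ (s+1)‖
          ≤ γ * ‖u ℓ s - u' ℓ s‖ + MA * ‖z (ℓ-1) (s+1) - z' (ℓ-1) (s+1)‖ := hrec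
        _ ≤ ∑ k ∈ Finset.Icc 1 s, γ ^ (s + 1 - k) * (MA * ‖z (ℓ-1) k - z' (ℓ-1) k‖)
            + MA * ‖z (ℓ-1) (s+1) - z' (ℓ-1) (s+1)‖ := by
            rw [← e]
            exact add_le_add step le_rfl
  -- layer induction on squared sums
  have key : ∀ ℓ, ℓ ≤ L →
      ∑ t ∈ Finset.Icc 1 T, ‖z ℓ t - z' ℓ t‖ ^ 2
        ≤ ((B₁ * MA * S) ^ ℓ) ^ 2 * ∑ t ∈ Finset.Icc 1 T, ‖x t - x' t‖ ^ 2 := by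
    intro ℓ
    induction ℓ with
    | zero =>
      intro _
      rw [pow_zero, one_pow, one_mul]
      apply le_of_eq
      apply Finset.sum_congr rfl
      intro t ht
      simp only [Finset.mem_Icc] at ht
      rw [hz0 t ht.1 ht.2, hz0' t ht.1 ht.2]
    | succ m ih =>
      intro hm
      have hm' : m ≤ L := le_trans (Nat.le_succ m) hm
      have h1 : 1 ≤ m + 1 := Nat.succ_le_succ (Nat.zero_le m)
      have pt : ∀ t, 1 ≤ t → t ≤ T → ‖z (m+1) t - z' (m+1) t‖
          ≤ ∑ k ∈ Finset.Icc 1 t, γ ^ (t - k) * (B₁ * MA * ‖z m k - z' m k‖) := by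
        intro t ht1 ht2
        have a2 := huun (m+1) h1 hm t ht2
        calc ‖z (m+1) t - z' (m+1) t‖
            ≤ B₁ * ‖u (m+1) t - u' (m+1) t‖ := hzb (m+1) h1 hm t ht1 ht2
          _ ≤ B₁ * ∑ k ∈ Finset.Icc 1 t, γ ^ (t - k) * (MA * ‖z m k - z' m k‖) :=
              mul_le_mul_of_nonneg_left a2 hB0
          _ = ∑ k ∈ Finset.Icc 1 t, γ ^ (t - k) * (B₁ * MA * ‖z m k - z' m k‖) := by
              rw [Finset.mul_sum]
              apply Finset.sum_congr rfl
              intro k _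
              ring
      have sq : ∑ t ∈ Finset.Icc 1 T, ‖z (m+1) t - z' (m+1) t‖ ^ 2
          ≤ ∑ t ∈ Finset.Icc 1 T,
              (∑ k ∈ Finset.Icc 1 t, γ ^ (t - k) * (B₁ * MA * ‖z m k - z' m k‖)) ^ 2 := by
        apply Finset.sum_le_sum
        intro t ht
        simp only [Finset.mem_Icc] at ht
        exact pow_le_pow_left₀ (norm_nonneg _) (pt t ht.1 ht.2) 2
      have cv := snn_conv_sq_sum T γ hγ0 (fun k => B₁ * MA * ‖z m k - z' m k‖)
      have e : ∑ k ∈ Finset.Icc 1 T, (B₁ * MA * ‖z m k - z' m k‖) ^ 2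
          = (B₁ * MA) ^ 2 * ∑ k ∈ Finset.Icc 1 T, ‖z m k - z' m k‖ ^ 2 := by
        rw [Finset.mul_sum]
        apply Finset.sum_congr rfl
        intro k _
        ring
      calc ∑ t ∈ Finset.Icc 1 T, ‖z (m+1) t - z' (m+1) t‖ ^ 2
          ≤ ∑ t ∈ Finset.Icc 1 T,
              (∑ k ∈ Finset.Icc 1 t, γ ^ (t - k) * (B₁ * MA * ‖z m k - z' m k‖)) ^ 2 := sq
        _ ≤ S ^ 2 * ∑ k ∈ Finset.Icc 1 T, (B₁ * MA * ‖z m k - z' m k‖) ^ 2 := cv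
        _ = S ^ 2 * ((B₁ * MA) ^ 2 * ∑ k ∈ Finset.Icc 1 T, ‖z m k - z' m k‖ ^ 2) := by
            rw [e]
        _ ≤ S ^ 2 * ((B₁ * MA) ^ 2
              * (((B₁ * MA * S) ^ m) ^ 2 * ∑ t ∈ Finset.Icc 1 T, ‖x t - x' t‖ ^ 2)) := by
            apply mul_le_mul_of_nonneg_left
              (mul_le_mul_of_nonneg_left (ih hm') (sq_nonneg _)) (sq_nonneg _)
        _ = ((B₁ * MA * S) ^ (m+1)) ^ 2 * ∑ t ∈ Finset.Icc 1 T, ‖x t - x' t‖ ^ 2 := by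
            ring
  -- final assembly
  have hT0 : (0:ℝ) < (T:ℝ) := Nat.cast_pos.mpr hT
  have lhs_eq : (Wout (((T : ℝ)⁻¹) • ∑ t ∈ Finset.Icc 1 T, z L t) + bout)
        - (Wout (((T : ℝ)⁻¹) • ∑ t ∈ Finset.Icc 1 T, z' L t) + bout)
      = Wout (((T : ℝ)⁻¹) • ∑ t ∈ Finset.Icc 1 T, (z L t - z' L t)) := by
    rw [Finset.sum_sub_distrib, smul_sub, map_sub]
    abel
  rw [lhs_eq]
  set w : EuclideanSpace ℝ (Fin (d L)) := ∑ t ∈ Finset.Icc 1 T, (z L t - z' L t) with hw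
  have n1 : ‖Wout (((T : ℝ)⁻¹) • w)‖ ≤ Mout * ((T:ℝ)⁻¹ * ‖w‖) := by
    calc ‖Wout (((T : ℝ)⁻¹) • w)‖ ≤ ‖Wout‖ * ‖((T : ℝ)⁻¹) • w‖ := Wout.le_opNorm _
      _ = ‖Wout‖ * ((T:ℝ)⁻¹ * ‖w‖) := by
          rw [norm_smul, Real.norm_eq_abs, abs_of_nonneg (inv_nonneg.2 hT0.le)]
      _ ≤ Mout * ((T:ℝ)⁻¹ * ‖w‖) := by
          apply mul_le_mul_of_nonneg_right hW
          exact mul_nonneg (inv_nonneg.2 hT0.le) (norm_nonneg _)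
  have n2 : ‖w‖ ≤ ∑ t ∈ Finset.Icc 1 T, ‖z L t - z' L t‖ := norm_sum_le _ _
  have n3 : ∑ t ∈ Finset.Icc 1 T, ‖z L t - z' L t‖
      ≤ Real.sqrt T * Real.sqrt (∑ t ∈ Finset.Icc 1 T, ‖z L t - z' L t‖ ^ 2) := by
    have cs := Finset.sum_mul_sq_le_sq_mul_sq (Finset.Icc 1 T)
      (fun _ => (1:ℝ)) (fun t => ‖z L t - z' L t‖)
    simp only [one_pow, one_mul, Finset.sum_const, Nat.card_Icc, Nat.add_sub_cancel,
      nsmul_eq_mul, mul_one] at cs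
    have h0 : 0 ≤ ∑ t ∈ Finset.Icc 1 T, ‖z L t - z' L t‖ :=
      Finset.sum_nonneg fun t _ => norm_nonneg _
    rw [← Real.sqrt_mul (by positivity)]
    rw [← Real.sqrt_sq h0]
    exact Real.sqrt_le_sqrt cs
  have hKnn : 0 ≤ (B₁ * MA * S) ^ L := pow_nonneg (mul_nonneg (mul_nonneg hB0 hMA0) hS0) L
  have n4 : Real.sqrt (∑ t ∈ Finset.Icc 1 T, ‖z L t - z' L t‖ ^ 2)
      ≤ (B₁ * MA * S) ^ L * Real.sqrt (∑ t ∈ Finset.Icc 1 T, ‖x t - x' t‖ ^ 2) := by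
    calc Real.sqrt (∑ t ∈ Finset.Icc 1 T, ‖z L t - z' L t‖ ^ 2)
        ≤ Real.sqrt (((B₁ * MA * S) ^ L) ^ 2 * ∑ t ∈ Finset.Icc 1 T, ‖x t - x' t‖ ^ 2) :=
          Real.sqrt_le_sqrt (key L le_rfl)
      _ = (B₁ * MA * S) ^ L * Real.sqrt (∑ t ∈ Finset.Icc 1 T, ‖x t - x' t‖ ^ 2) := by
          rw [Real.sqrt_mul (sq_nonneg _), Real.sqrt_sq hKnn]
  have hTT : (T:ℝ)⁻¹ * Real.sqrt T = (Real.sqrt T)⁻¹ := by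
    rw [show ((T:ℝ)) = Real.sqrt T * Real.sqrt T from (Real.mul_self_sqrt hT0.le).symm]
    have hsT : (0:ℝ) < Real.sqrt T := Real.sqrt_pos.2 hT0
    field_simp
    rw [Real.sqrt_sq hsT.le]
  calc ‖Wout (((T : ℝ)⁻¹) • w)‖
      ≤ Mout * ((T:ℝ)⁻¹ * ‖w‖) := n1
    _ ≤ Mout * ((T:ℝ)⁻¹ * (Real.sqrt T
          * ((B₁ * MA * S) ^ L * Real.sqrt (∑ t ∈ Finset.Icc 1 T, ‖x t - x' t‖ ^ 2)))) := by
        apply mul_le_mul_of_nonneg_left _ hMout0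
        apply mul_le_mul_of_nonneg_left _ (inv_nonneg.2 hT0.le)
        calc ‖w‖ ≤ Real.sqrt T * Real.sqrt (∑ t ∈ Finset.Icc 1 T, ‖z L t - z' L t‖ ^ 2) :=
              le_trans n2 n3
          _ ≤ Real.sqrt T * ((B₁ * MA * S) ^ L
                * Real.sqrt (∑ t ∈ Finset.Icc 1 T, ‖x t - x' t‖ ^ 2)) :=
              mul_le_mul_of_nonneg_left n4 (Real.sqrt_nonneg _)
    _ = Mout * (B₁ * MA * S) ^ L / Real.sqrt T
          * Real.sqrt (∑ t ∈ Finset.Icc 1 T, ‖x t - x' t‖ ^ 2) := by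
        rw [div_eq_mul_inv, ← hTT]
        ring
end

section
/- Let L : ℝ^p → ℝ be differentiable with β-Lipschitz gradient (β > 0), and let w, ε ∈ ℝ^p with ‖ε‖₂ ≤ ρ. Let 0 < η ≤ 1/(4β) and set w⁺ := w - η ∇L(w + ε). Then L(w⁺) ≤ L(w) - (η/2 - β η²) ‖∇L(w)‖₂² + (η/2 + β η²) β² ρ², and in particular L(w⁺) ≤ L(w) - (η/4) ‖∇L(w)‖₂² + (3η/4) β² ρ². -/
open InnerProductSpace

local notation "⟪" x ", " y "⟫" => @inner ℝ _ _ x y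

/-- Descent lemma for β-smooth functions. -/
lemma descent_lemma {p : ℕ} (L : EuclideanSpace ℝ (Fin p) → ℝ) (β : ℝ) (hβ : 0 < β)
    (hdiff : Differentiable ℝ L)
    (hsmooth : ∀ v v', ‖gradient L v - gradient L v'‖ ≤ β * ‖v - v'‖)
    (x y : EuclideanSpace ℝ (Fin p)) :
    L y ≤ L x + ⟪gradient L x, y - x⟫ + β / 2 * ‖y - x‖ ^ 2 := by
  set v := y - x with hv
  have hgradcont : Continuous fun z => gradient L z := by
    have : LipschitzWith ⟨β, hβ.le⟩ (gradient L) :=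
      LipschitzWith.of_dist_le_mul fun a b => by
        rw [dist_eq_norm, dist_eq_norm]; exact hsmooth a b
    exact this.continuous
  have key : ∀ t : ℝ, HasDerivAt (fun t : ℝ => L (x + t • v))
      (⟪gradient L (x + t • v), v⟫) t := by
    intro t
    have h2 : HasDerivAt (fun t : ℝ => x + t • v) v t := by
      simpa using ((hasDerivAt_id t).smul_const v).const_add x
    have h1 := ((hdiff (x + t • v)).hasGradientAt.hasFDerivAt).comp_hasDerivAt t h2
    rw [toDual_apply_apply] at h1
    exact h1
  have hcont : Continuous fun t : ℝ => ⟪gradient L (x + t • v), v⟫ := by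
    exact (hgradcont.comp (by continuity)).inner continuous_const
  have hftc : L y - L x = ∫ t in (0:ℝ)..1, ⟪gradient L (x + t • v), v⟫ := by
    have := intervalIntegral.integral_eq_sub_of_hasDerivAt
      (fun t _ => key t) (hcont.intervalIntegrable 0 1)
    rw [this]
    norm_num [hv]
  have hbound : ∀ t ∈ Set.Icc (0:ℝ) 1,
      ⟪gradient L (x + t • v), v⟫ ≤ ⟪gradient L x, v⟫ + β * ‖v‖ ^ 2 * t := by
    intro t ht
    have h1 : ⟪gradient L (x + t • v), v⟫ - ⟪gradient L x, v⟫
        = ⟪gradient L (x + t • v) - gradient L x, v⟫ := by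
      rw [inner_sub_left]
    have h2 : ⟪gradient L (x + t • v) - gradient L x, v⟫
        ≤ ‖gradient L (x + t • v) - gradient L x‖ * ‖v‖ :=
      real_inner_le_norm _ _
    have h3 : ‖gradient L (x + t • v) - gradient L x‖ ≤ β * ‖x + t • v - x‖ :=
      hsmooth _ _
    have h4 : ‖x + t • v - x‖ = t * ‖v‖ := by
      rw [add_sub_cancel_left, norm_smul, Real.norm_eq_abs, abs_of_nonneg ht.1]
    have h5 := mul_le_mul_of_nonneg_right h3 (norm_nonneg v)
    rw [h4] at h5
    nlinarith [h1, h2, h5]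
  have hint : (∫ t in (0:ℝ)..1, ⟪gradient L (x + t • v), v⟫)
      ≤ ∫ t in (0:ℝ)..1, (⟪gradient L x, v⟫ + β * ‖v‖ ^ 2 * t) := by
    apply intervalIntegral.integral_mono_on (by norm_num)
      (hcont.intervalIntegrable 0 1)
      ((continuous_const.add (continuous_const.mul continuous_id)).intervalIntegrable 0 1)
    exact hbound
  have hval : (∫ t in (0:ℝ)..1, (⟪gradient L x, v⟫ + β * ‖v‖ ^ 2 * t))
      = ⟪gradient L x, v⟫ + β / 2 * ‖v‖ ^ 2 := by
    have hI : IntervalIntegrable (fun t : ℝ => β * ‖v‖ ^ 2 * t)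
        MeasureTheory.volume 0 1 := by
      apply Continuous.intervalIntegrable; continuity
    rw [intervalIntegral.integral_add intervalIntegrable_const hI,
      intervalIntegral.integral_const_mul, integral_id]
    simp
    ring
  linarith [hftc ▸ hint.trans_eq hval]

set_option maxHeartbeats 1000000 in
/-- One SAM-style descent step: if `L` is differentiable
with `β`-Lipschitz gradient (`β > 0`), `‖ε‖ ≤ ρ`, `0 < η ≤ 1/(4β)`, and
`w⁺ = w - η ∇L(w + ε)`, then
`L(w⁺) ≤ L(w) - (η/2 - βη²)‖∇L(w)‖² + (η/2 + βη²)β²ρ²`, and in particular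
`L(w⁺) ≤ L(w) - (η/4)‖∇L(w)‖² + (3η/4)β²ρ²`. -/
theorem sam_descent_step
    (p : ℕ) (hp : 1 ≤ p)
    (L : EuclideanSpace ℝ (Fin p) → ℝ) (β ρ η : ℝ) (hβ : 0 < β) (hρ : 0 ≤ ρ)
    (hdiff : Differentiable ℝ L)
    (hsmooth : ∀ v v', ‖gradient L v - gradient L v'‖ ≤ β * ‖v - v'‖)
    (hη0 : 0 < η) (hη : η ≤ 1 / (4 * β))
    (w ε : EuclideanSpace ℝ (Fin p)) (hε : ‖ε‖ ≤ ρ) :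
    L (w - η • gradient L (w + ε))
        ≤ L w - (η / 2 - β * η ^ 2) * ‖gradient L w‖ ^ 2
          + (η / 2 + β * η ^ 2) * β ^ 2 * ρ ^ 2 ∧
    L (w - η • gradient L (w + ε))
        ≤ L w - (η / 4) * ‖gradient L w‖ ^ 2
          + (3 * η / 4) * β ^ 2 * ρ ^ 2 := by
  set g := gradient L (w + ε) with hg
  set G := gradient L w with hG
  have hdiffnorm : ‖g - G‖ ≤ β * ρ := by
    have h := hsmooth (w + ε) w
    rw [add_sub_cancel_left] at h
    exact h.trans (mul_le_mul_of_nonneg_left hε hβ.le)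
  have hdesc := descent_lemma L β hβ hdiff hsmooth w (w - η • g)
  have hsub : w - η • g - w = -(η • g) := by abel
  have hinner : ⟪G, w - η • g - w⟫ = -(η * ⟪G, g⟫) := by
    rw [hsub, inner_neg_right, real_inner_smul_right]
  have hnorm : ‖w - η • g - w‖ ^ 2 = η ^ 2 * ‖g‖ ^ 2 := by
    rw [hsub, norm_neg, norm_smul, Real.norm_eq_abs, abs_of_pos hη0, mul_pow]
  rw [hinner, hnorm] at hdesc
  -- inner product bound
  have hip : ⟪G, g⟫ ≥ 1/2 * ‖G‖ ^ 2 - 1/2 * β ^ 2 * ρ ^ 2 := by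
    have h1 : ⟪G, g⟫ = ‖G‖ ^ 2 + ⟪G, g - G⟫ := by
      rw [inner_sub_right, real_inner_self_eq_norm_sq]; ring
    have h2 : |⟪G, g - G⟫| ≤ ‖G‖ * ‖g - G‖ := abs_real_inner_le_norm _ _
    have h3 : ‖G‖ * ‖g - G‖ ≤ ‖G‖ * (β * ρ) :=
      mul_le_mul_of_nonneg_left hdiffnorm (norm_nonneg _)
    nlinarith [abs_le.mp h2, norm_nonneg G, sq_nonneg (‖G‖ - β * ρ)]
  have hgn : ‖g‖ ^ 2 ≤ 2 * ‖G‖ ^ 2 + 2 * β ^ 2 * ρ ^ 2 := by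
    have h1 : ‖g‖ ≤ ‖G‖ + β * ρ := by
      have hgg : G + (g - G) = g := by abel
      calc ‖g‖ = ‖G + (g - G)‖ := by rw [hgg]
        _ ≤ ‖G‖ + ‖g - G‖ := norm_add_le _ _
        _ ≤ ‖G‖ + β * ρ := by linarith
    nlinarith [norm_nonneg g, norm_nonneg G, sq_nonneg (‖G‖ - β * ρ)]
  have hbη : β * η ≤ 1 / 4 := by
    rw [le_div_iff₀ (by positivity)] at hη
    nlinarith
  have hmain : L (w - η • g)
      ≤ L w - (η / 2 - β * η ^ 2) * ‖G‖ ^ 2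
        + (η / 2 + β * η ^ 2) * β ^ 2 * ρ ^ 2 := by
    have hA := mul_le_mul_of_nonneg_left hip hη0.le
    have hB := mul_le_mul_of_nonneg_left hgn
      (by positivity : (0:ℝ) ≤ β * η ^ 2 / 2)
    nlinarith [hdesc, hA, hB]
  refine ⟨hmain, ?_⟩
  have hbη2 := mul_le_mul_of_nonneg_right hbη hη0.le
  nlinarith [hmain, sq_nonneg ‖G‖, sq_nonneg ρ, sq_nonneg (β * ρ), hbη2]
end
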